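/- Let k ≥ n ≥ 3 and j ≥ n. Then the indices r for which the largest summand of the n-decomposition of q(r) is F_{n,k+j} (i.e., the largest index in the n-decomposition of q(r) equals k+j) are exactly those r with F_{n,j} + 1 ≤ r ≤ F_{n,j+1}. -/

import Mathlib

/-- `L` encodes an `n`-decomposition of `x`: indices at least `n`, consecutive
gaps at least `n`, summing (via `F`) to `x`. -/
def IsDecompOf (n : ℕ) (F : ℕ → ℕ) (L : List ℕ) (x : ℕ) : Prop :=
  (∀ c ∈ L, n ≤ c) ∧ L.Chain' (fun a b => a + n ≤ b) ∧ (L.map F).sum = x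

/-- `x` is a positive integer whose `n`-decomposition has `F k` as its
smallest summand (i.e. `k` is the smallest index used). -/
def MemXnk (n k : ℕ) (F : ℕ → ℕ) (x : ℕ) : Prop :=
  0 < x ∧ ∃ L : List ℕ, IsDecompOf n F L x ∧ k ∈ L ∧ ∀ c ∈ L, k ≤ c

section Aux

lemma chainPW {n : ℕ} {L : List ℕ} :
    L.Chain' (fun a b => a + n ≤ b) ↔ L.Pairwise (fun a b => a + n ≤ b) := by
  haveI : IsTrans ℕ (fun a b => a + n ≤ b) :=
    ⟨fun a b c h1 h2 => le_trans h1 (le_trans (Nat.le_add_right b n) h2)⟩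
  exact List.isChain_iff_pairwise

lemma myFpos {n : ℕ} {F : ℕ → ℕ} (hn : 3 ≤ n)
    (hF1 : ∀ i, 1 ≤ i → i ≤ n → F i = 1)
    (hFrec : ∀ m, n ≤ m → F (m + 1) = F m + F (m + 1 - n)) :
    ∀ i, 1 ≤ i → 1 ≤ F i := by
  intro i
  induction i using Nat.strong_induction_on with
  | _ i ih =>
    intro hi
    by_cases h : i ≤ n
    · rw [hF1 i hi h]
    · push_neg at h
      obtain ⟨m, rfl⟩ : ∃ m, i = m + 1 := ⟨i - 1, by omega⟩
      rw [hFrec m (by omega)]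
      have := ih m (by omega) (by omega)
      omega

lemma Fmono {n : ℕ} {F : ℕ → ℕ} (hn : 3 ≤ n)
    (hF1 : ∀ i, 1 ≤ i → i ≤ n → F i = 1)
    (hFrec : ∀ m, n ≤ m → F (m + 1) = F m + F (m + 1 - n)) :
    ∀ a b, n ≤ a → a ≤ b → F a ≤ F b := by
  intro a b ha hab
  induction b, hab using Nat.le_induction with
  | base => exact le_refl _
  | succ m hm ih =>
    have h1 : F (m + 1) = F m + F (m + 1 - n) := hFrec m (le_trans ha hm)
    omega

lemma Fstrict {n : ℕ} {F : ℕ → ℕ} (hn : 3 ≤ n)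
    (hF1 : ∀ i, 1 ≤ i → i ≤ n → F i = 1)
    (hFrec : ∀ m, n ≤ m → F (m + 1) = F m + F (m + 1 - n)) :
    ∀ a b, n ≤ a → a < b → F a < F b := by
  intro a b ha hab
  obtain ⟨m, rfl⟩ : ∃ m, b = m + 1 := ⟨b - 1, by omega⟩
  have h1 : F a ≤ F m := Fmono hn hF1 hFrec a m ha (by omega)
  have h2 : F (m + 1) = F m + F (m + 1 - n) := hFrec m (by omega)
  have h3 : 1 ≤ F (m + 1 - n) := myFpos hn hF1 hFrec _ (by omega)
  omega

lemma le_sum' {n : ℕ} {F : ℕ → ℕ} {L : List ℕ} {x m : ℕ}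
    (h : IsDecompOf n F L x) (hm : m ∈ L) : F m ≤ x := by
  obtain ⟨-, -, rfl⟩ := h
  exact List.single_le_sum (fun _ _ => Nat.zero_le _) _ (List.mem_map_of_mem (f := F) hm)

lemma sum_lt {n : ℕ} {F : ℕ → ℕ} (hn : 3 ≤ n)
    (hF1 : ∀ i, 1 ≤ i → i ≤ n → F i = 1)
    (hFrec : ∀ m, n ≤ m → F (m + 1) = F m + F (m + 1 - n)) :
    ∀ t (L : List ℕ) (x : ℕ), IsDecompOf n F L x → (∀ c ∈ L, c ≤ t) → x < F (t + 1) := by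
  intro t
  induction t using Nat.strong_induction_on with
  | _ t ih =>
    intro L x hL hle
    obtain rfl | ⟨L', c, rfl⟩ := L.eq_nil_or_concat
    · obtain ⟨-, -, h⟩ := hL
      have hx0 : x = 0 := by simpa using h.symm
      have := myFpos hn hF1 hFrec (t + 1) (by omega)
      omega
    · simp only [List.concat_eq_append] at hL hle
      obtain ⟨hmem, hch, hsum⟩ := hL
      have hpw := chainPW.mp hch
      rw [List.pairwise_append] at hpw
      have hcn : n ≤ c := hmem c (List.mem_append_right _ (by simp))
      have hct : c ≤ t := hle c (List.mem_append_right _ (by simp))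
      have hub : ∀ a ∈ L', a ≤ c - n := by
        intro a ha; have := hpw.2.2 a ha c (by simp); omega
      have hdec : IsDecompOf n F L' ((L'.map F).sum) :=
        ⟨fun a ha => hmem a (List.mem_append_left _ ha), chainPW.mpr hpw.1, rfl⟩
      have h1 : (L'.map F).sum < F (c - n + 1) := ih (c - n) (by omega) L' _ hdec hub
      have h2 : F (c + 1) = F c + F (c + 1 - n) := hFrec c hcn
      have h3 : F (c + 1) ≤ F (t + 1) := Fmono hn hF1 hFrec (c + 1) (t + 1) (by omega) (by omega)
      have h4 : c - n + 1 = c + 1 - n := by omega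
      rw [h4] at h1
      have hx : x = (L'.map F).sum + F c := by
        rw [← hsum, List.map_append, List.sum_append]; simp
      omega

lemma qle {q : ℕ → ℕ} (hq_mono : ∀ r, 1 ≤ r → q r < q (r + 1)) :
    ∀ r r', 1 ≤ r → r ≤ r' → q r ≤ q r' := by
  intro r r' hr h
  induction r', h using Nat.le_induction with
  | base => exact le_refl _
  | succ m hm ih => exact le_trans ih (le_of_lt (hq_mono m (by omega)))

lemma qlt {q : ℕ → ℕ} (hq_mono : ∀ r, 1 ≤ r → q r < q (r + 1)) :
    ∀ r r', 1 ≤ r → r < r' → q r < q r' := by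
  intro r r' hr h
  have h1 : q r ≤ q (r' - 1) := qle hq_mono r (r' - 1) hr (by omega)
  have h2 : q (r' - 1) < q (r' - 1 + 1) := hq_mono (r' - 1) (by omega)
  have h3 : r' - 1 + 1 = r' := by omega
  rw [h3] at h2; omega

lemma qinj {q : ℕ → ℕ} (hq_mono : ∀ r, 1 ≤ r → q r < q (r + 1)) :
    ∀ a b, 1 ≤ a → 1 ≤ b → q a = q b → a = b := by
  intro a b ha hb hab
  rcases Nat.lt_trichotomy a b with h | h | h
  · have := qlt hq_mono a b ha h; omega
  · exact h
  · have := qlt hq_mono b a hb h; omega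

lemma second_ge {n k : ℕ} {F : ℕ → ℕ} (hn : 3 ≤ n) (hk : n ≤ k)
    (hF1 : ∀ i, 1 ≤ i → i ≤ n → F i = 1)
    (hFrec : ∀ m, n ≤ m → F (m + 1) = F m + F (m + 1 - n))
    {x : ℕ} (hx : MemXnk n k F x) (hgt : F k < x) : F (k + n) ≤ x := by
  obtain ⟨hpos, L, ⟨hmem, hch, hsum⟩, hkL, hmin⟩ := hx
  rcases L with _ | ⟨a, L2⟩
  · simp at hkL
  rcases L2 with _ | ⟨b, tl⟩
  · have : k = a := by simpa using hkL
    subst this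
    simp at hsum
    omega
  · have hab : a + n ≤ b := (List.isChain_cons_cons.mp hch).1
    have hka : k ≤ a := hmin a (by simp)
    have hFb : F b ≤ x := by
      rw [← hsum]
      exact List.single_le_sum (fun _ _ => Nat.zero_le _) _
        (List.mem_map_of_mem (f := F) (by simp))
    have : F (k + n) ≤ F b := Fmono hn hF1 hFrec _ _ (by omega) (by omega)
    omega

lemma q_one {n k : ℕ} {F : ℕ → ℕ} {q : ℕ → ℕ} (hn : 3 ≤ n) (hk : n ≤ k)
    (hF1 : ∀ i, 1 ≤ i → i ≤ n → F i = 1)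
    (hFrec : ∀ m, n ≤ m → F (m + 1) = F m + F (m + 1 - n))
    (hq_mem : ∀ r, 1 ≤ r → MemXnk n k F (q r))
    (hq_mono : ∀ r, 1 ≤ r → q r < q (r + 1))
    (hq_surj : ∀ x, MemXnk n k F x → ∃ r, 1 ≤ r ∧ q r = x) :
    q 1 = F k := by
  have hFk : 1 ≤ F k := myFpos hn hF1 hFrec k (by omega)
  have hmem : MemXnk n k F (F k) := by
    refine ⟨by omega, [k], ⟨?_, ?_, ?_⟩, by simp, by simp⟩
    · intro c hc; simp at hc; omega
    · exact List.isChain_singleton _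
    · simp
  obtain ⟨r, hr, hqr⟩ := hq_surj _ hmem
  have h1 : q 1 ≤ q r := qle hq_mono 1 r le_rfl hr
  obtain ⟨-, L, hL, hkL, -⟩ := hq_mem 1 le_rfl
  have h2 : F k ≤ q 1 := le_sum' hL hkL
  omega

lemma split {n k : ℕ} {F : ℕ → ℕ} (hn : 3 ≤ n) (hk : n ≤ k)
    (hF1 : ∀ i, 1 ≤ i → i ≤ n → F i = 1)
    (hFrec : ∀ m, n ≤ m → F (m + 1) = F m + F (m + 1 - n))
    {m : ℕ} (hm : n ≤ m) {x : ℕ}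
    (hx : MemXnk n k F x) (h1 : F (k + m) ≤ x) (h2 : x < F (k + m + 1)) :
    MemXnk n k F (x - F (k + m)) ∧ x - F (k + m) < F (k + m + 1 - n) := by
  obtain ⟨hxpos, L, hL, hkL, hmin⟩ := hx
  obtain rfl | ⟨L', c, rfl⟩ := L.eq_nil_or_concat
  · simp at hkL
  simp only [List.concat_eq_append] at hL hkL hmin
  obtain ⟨hmem, hch, hsum⟩ := hL
  have hpw := chainPW.mp hch
  rw [List.pairwise_append] at hpw
  have hcn : n ≤ c := hmem c (List.mem_append_right _ (by simp))
  have hxc : F c ≤ x := le_sum' ⟨hmem, hch, hsum⟩ (List.mem_append_right _ (by simp))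
  have hxlt : x < F (c + 1) := by
    refine sum_lt hn hF1 hFrec c (L' ++ [c]) x ⟨hmem, hch, hsum⟩ ?_
    intro a ha
    rcases List.mem_append.mp ha with h | h
    · have := hpw.2.2 a h c (by simp); omega
    · simp at h; omega
  have hceq : c = k + m := by
    by_contra hne
    rcases Nat.lt_or_ge c (k + m) with h | h
    · have : F (c + 1) ≤ F (k + m) := Fmono hn hF1 hFrec _ _ (by omega) (by omega)
      omega
    · have hgt : k + m < c := by omega
      have : F (k + m + 1) ≤ F c := Fmono hn hF1 hFrec _ _ (by omega) (by omega)
      omega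
  subst hceq
  have hkL' : k ∈ L' := by
    rcases List.mem_append.mp hkL with h | h
    · exact h
    · simp at h; omega
  have hsum' : (L'.map F).sum + F (k + m) = x := by
    rw [← hsum, List.map_append, List.sum_append]; simp
  have hdec' : IsDecompOf n F L' (x - F (k + m)) :=
    ⟨fun a ha => hmem a (List.mem_append_left _ ha), chainPW.mpr hpw.1, by omega⟩
  have hFk : 1 ≤ F k := myFpos hn hF1 hFrec k (by omega)
  have hle : F k ≤ (L'.map F).sum :=
    List.single_le_sum (fun _ _ => Nat.zero_le _) _ (List.mem_map_of_mem (f := F) hkL')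
  refine ⟨⟨by omega, L', hdec', hkL', fun a ha => hmin a (List.mem_append_left _ ha)⟩, ?_⟩
  have hub : x - F (k + m) < F (k + m - n + 1) := by
    refine sum_lt hn hF1 hFrec (k + m - n) L' _ hdec' ?_
    intro a ha
    have := hpw.2.2 a ha (k + m) (by simp)
    omega
  have heq : k + m - n + 1 = k + m + 1 - n := by omega
  rw [heq] at hub
  exact hub

lemma build {n k : ℕ} {F : ℕ → ℕ} (hn : 3 ≤ n) (hk : n ≤ k)
    (hF1 : ∀ i, 1 ≤ i → i ≤ n → F i = 1)
    (hFrec : ∀ m, n ≤ m → F (m + 1) = F m + F (m + 1 - n))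
    {j : ℕ} (hj : n ≤ j) {y : ℕ} (hy : MemXnk n k F y)
    (hlt : y < F (k + j + 1 - n)) :
    ∃ L, IsDecompOf n F L (F (k + j) + y) ∧ (k + j) ∈ L ∧ (∀ c ∈ L, c ≤ k + j)
      ∧ MemXnk n k F (F (k + j) + y) := by
  obtain ⟨hypos, L', ⟨hmem, hch, hsum⟩, hkL', hmin⟩ := hy
  have hub : ∀ a ∈ L', a ≤ k + j - n := by
    intro a ha
    by_contra h; push_neg at h
    have h1 : F (k + j + 1 - n) ≤ F a := Fmono hn hF1 hFrec _ _ (by omega) (by omega)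
    have h2 : F a ≤ y := by
      rw [← hsum]
      exact List.single_le_sum (fun _ _ => Nat.zero_le _) _ (List.mem_map_of_mem (f := F) ha)
    omega
  have hchain : (L' ++ [k + j]).Chain' (fun a b => a + n ≤ b) := by
    apply chainPW.mpr
    rw [List.pairwise_append]
    refine ⟨chainPW.mp hch, List.pairwise_singleton _ _, ?_⟩
    intro a ha b hb
    simp at hb; subst hb
    have := hub a ha; omega
  have hdec : IsDecompOf n F (L' ++ [k + j]) (F (k + j) + y) := by
    refine ⟨?_, hchain, ?_⟩
    · intro c hc
      rcases List.mem_append.mp hc with h | h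
      · exact hmem c h
      · simp at h; omega
    · rw [List.map_append, List.sum_append, hsum]; simp [Nat.add_comm]
  refine ⟨L' ++ [k + j], hdec, by simp, ?_, ?_⟩
  · intro c hc
    rcases List.mem_append.mp hc with h | h
    · have := hub c h; omega
    · simp at h; omega
  · refine ⟨?_, L' ++ [k + j], hdec, List.mem_append_left _ hkL', ?_⟩
    · have := myFpos hn hF1 hFrec (k + j) (by omega); omega
    · intro c hc
      rcases List.mem_append.mp hc with h | h
      · exact hmin c h
      · simp at h; omega

lemma key {n k : ℕ} {F : ℕ → ℕ} {q : ℕ → ℕ} (hn : 3 ≤ n) (hk : n ≤ k)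
    (hF1 : ∀ i, 1 ≤ i → i ≤ n → F i = 1)
    (hFrec : ∀ m, n ≤ m → F (m + 1) = F m + F (m + 1 - n))
    (hq_mem : ∀ r, 1 ≤ r → MemXnk n k F (q r))
    (hq_mono : ∀ r, 1 ≤ r → q r < q (r + 1))
    (hq_surj : ∀ x, MemXnk n k F x → ∃ r, 1 ≤ r ∧ q r = x) :
    ∀ j, 1 ≤ j → ∀ r, 1 ≤ r → (q r < F (k + j) ↔ r ≤ F j) := by
  intro j
  induction j using Nat.strong_induction_on with
  | _ j ih =>
    intro hj r hr
    by_cases hjn : j ≤ n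
    · -- base case
      have hFj : F j = 1 := hF1 j hj hjn
      have hq1 : q 1 = F k := q_one hn hk hF1 hFrec hq_mem hq_mono hq_surj
      rw [hFj]
      constructor
      · intro h
        by_contra hr2
        push_neg at hr2
        have hlt : q 1 < q r := qlt hq_mono 1 r le_rfl (by omega)
        have hge : F (k + n) ≤ q r :=
          second_ge hn hk hF1 hFrec (hq_mem r hr) (by omega)
        have : F (k + j) ≤ F (k + n) := Fmono hn hF1 hFrec _ _ (by omega) (by omega)
        omega
      · intro hle
        have hre : r = 1 := by omega
        subst hre
        rw [hq1]
        exact Fstrict hn hF1 hFrec k (k + j) hk (by omega)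
    · -- inductive step
      push_neg at hjn
      obtain ⟨m, rfl⟩ : ∃ m, j = m + 1 := ⟨j - 1, by omega⟩
      have hm : n ≤ m := by omega
      rw [show k + (m + 1) = k + m + 1 from rfl]
      have Sm : ∀ r, 1 ≤ r → (q r < F (k + m) ↔ r ≤ F m) :=
        fun r hr => ih m (by omega) (by omega) r hr
      have Sm' : ∀ r, 1 ≤ r → (q r < F (k + (m + 1 - n)) ↔ r ≤ F (m + 1 - n)) :=
        fun r hr => ih (m + 1 - n) (by omega) (by omega) r hr
      have hrecm : F (m + 1) = F m + F (m + 1 - n) := hFrec m hm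
      have hreck : F (k + m + 1) = F (k + m) + F (k + m + 1 - n) := hFrec (k + m) (by omega)
      have hidx : k + (m + 1 - n) = k + m + 1 - n := by omega
      have hB1pos : 1 ≤ F m := myFpos hn hF1 hFrec _ (by omega)
      have hB2pos : 1 ≤ F (m + 1 - n) := myFpos hn hF1 hFrec _ (by omega)
      set A : Finset ℕ := (Finset.Icc 1 (F m)).image q with hA
      set Bs : Finset ℕ := (Finset.Icc 1 (F (m + 1 - n))).image (fun i => F (k + m) + q i) with hBs
      have hc1 : ∀ x ∈ A ∪ Bs, MemXnk n k F x ∧ x < F (k + m + 1) := by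
        intro x hx
        rcases Finset.mem_union.mp hx with hx | hx
        · obtain ⟨i, hi, rfl⟩ := Finset.mem_image.mp hx
          rw [Finset.mem_Icc] at hi
          have hlt : q i < F (k + m) := (Sm i hi.1).mpr hi.2
          exact ⟨hq_mem i hi.1, by omega⟩
        · obtain ⟨i, hi, rfl⟩ := Finset.mem_image.mp hx
          rw [Finset.mem_Icc] at hi
          have hlt : q i < F (k + m + 1 - n) := by
            have := (Sm' i hi.1).mpr hi.2
            rwa [hidx] at this
          obtain ⟨L, hL, hmemL, hleL, hmx⟩ := build hn hk hF1 hFrec hm (hq_mem i hi.1) hlt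
          exact ⟨hmx, by omega⟩
      have hc2 : ∀ x, MemXnk n k F x → x < F (k + m + 1) → x ∈ A ∪ Bs := by
        intro x hx hxlt
        obtain ⟨r', hr', rfl⟩ := hq_surj x hx
        by_cases hcase : q r' < F (k + m)
        · have hle : r' ≤ F m := (Sm r' hr').mp hcase
          exact Finset.mem_union_left _
            (Finset.mem_image.mpr ⟨r', Finset.mem_Icc.mpr ⟨hr', hle⟩, rfl⟩)
        · push_neg at hcase
          obtain ⟨hy, hylt⟩ := split hn hk hF1 hFrec hm hx hcase hxlt
          obtain ⟨i, hi, hqi⟩ := hq_surj _ hy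
          have hle : i ≤ F (m + 1 - n) := (Sm' i hi).mp (by rw [hidx, hqi]; exact hylt)
          have hqx : F (k + m) + q i = q r' := by rw [hqi]; omega
          exact Finset.mem_union_right _
            (Finset.mem_image.mpr ⟨i, Finset.mem_Icc.mpr ⟨hi, hle⟩, hqx⟩)
      have hAq : ∀ x ∈ A, x < F (k + m) := by
        intro x hx
        obtain ⟨i, hi, rfl⟩ := Finset.mem_image.mp hx
        rw [Finset.mem_Icc] at hi
        exact (Sm i hi.1).mpr hi.2
      have hBq : ∀ x ∈ Bs, F (k + m) ≤ x := by
        intro x hx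
        obtain ⟨i, hi, rfl⟩ := Finset.mem_image.mp hx
        exact Nat.le_add_right _ _
      have hdisj : Disjoint A Bs := by
        rw [Finset.disjoint_left]
        intro x hxA hxB
        have h1 := hAq x hxA
        have h2 := hBq x hxB
        omega
      have hAcard : A.card = F m := by
        rw [hA, Finset.card_image_of_injOn, Nat.card_Icc]
        · omega
        · intro a ha b hb hab
          simp only [Finset.coe_Icc, Set.mem_Icc] at ha hb
          exact qinj hq_mono a b ha.1 hb.1 hab
      have hBcard : Bs.card = F (m + 1 - n) := by
        rw [hBs, Finset.card_image_of_injOn, Nat.card_Icc]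
        · omega
        · intro a ha b hb hab
          simp only [Finset.coe_Icc, Set.mem_Icc] at ha hb
          simp only at hab
          exact qinj hq_mono a b ha.1 hb.1 (by omega)
      have hTcard : (A ∪ Bs).card = F (m + 1) := by
        rw [Finset.card_union_of_disjoint hdisj, hAcard, hBcard]
        omega
      constructor
      · intro hqr
        by_contra hgt
        push_neg at hgt
        have hsub : (Finset.Icc 1 r).image q ⊆ A ∪ Bs := by
          intro x hx
          obtain ⟨i, hi, rfl⟩ := Finset.mem_image.mp hx
          rw [Finset.mem_Icc] at hi
          have h1 : q i ≤ q r := qle hq_mono i r hi.1 hi.2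
          exact hc2 (q i) (hq_mem i hi.1) (by omega)
        have hinj : Set.InjOn q (Finset.Icc 1 r : Finset ℕ) := by
          intro a ha b hb hab
          simp only [Finset.coe_Icc, Set.mem_Icc] at ha hb
          exact qinj hq_mono a b ha.1 hb.1 hab
        have h1 := Finset.card_le_card hsub
        rw [Finset.card_image_of_injOn hinj, Nat.card_Icc, hTcard] at h1
        omega
      · intro hrle
        have hpos : 1 ≤ F (m + 1) := by omega
        have hQ : q (F (m + 1)) < F (k + m + 1) := by
          by_contra hge
          push_neg at hge
          have hsub : A ∪ Bs ⊆ (Finset.Icc 1 (F (m + 1) - 1)).image q := by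
            intro x hx
            obtain ⟨hmX, hxlt⟩ := hc1 x hx
            obtain ⟨i, hi, rfl⟩ := hq_surj x hmX
            refine Finset.mem_image.mpr ⟨i, Finset.mem_Icc.mpr ⟨hi, ?_⟩, rfl⟩
            by_contra hbig
            push_neg at hbig
            have := qle hq_mono (F (m + 1)) i hpos (by omega)
            omega
          have hc := Finset.card_le_card hsub
          rw [hTcard] at hc
          have hcim := Finset.card_image_le (s := Finset.Icc 1 (F (m + 1) - 1)) (f := q)
          rw [Nat.card_Icc] at hcim
          omega
        have := qle hq_mono r (F (m + 1)) hr hrle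
        omega

end Aux

/-- Let `k ≥ n ≥ 3` and `j ≥ n`, and let `q 1 < q 2 < ⋯` be the increasing
enumeration of the set `X_{n,k}` of positive integers whose `n`-decomposition
has `F k` as smallest summand.  Then the indices `r` for which the largest
summand of the `n`-decomposition of `q r` is `F (k+j)` are exactly those with
`F j + 1 ≤ r ≤ F (j+1)`. -/
theorem rows_with_largest_summand (n k : ℕ) (hn : 3 ≤ n) (hk : n ≤ k)
    (F : ℕ → ℕ)
    (hF1 : ∀ i, 1 ≤ i → i ≤ n → F i = 1)
    (hFrec : ∀ m, n ≤ m → F (m + 1) = F m + F (m + 1 - n))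
    (q : ℕ → ℕ)
    (hq_mem : ∀ r, 1 ≤ r → MemXnk n k F (q r))
    (hq_mono : ∀ r, 1 ≤ r → q r < q (r + 1))
    (hq_surj : ∀ x, MemXnk n k F x → ∃ r, 1 ≤ r ∧ q r = x)
    (j : ℕ) (hj : n ≤ j) :
    ∀ r, 1 ≤ r →
      ((∃ L : List ℕ, IsDecompOf n F L (q r) ∧ (k + j) ∈ L ∧ ∀ c ∈ L, c ≤ k + j)
        ↔ (F j + 1 ≤ r ∧ r ≤ F (j + 1))) := by
  intro r hr
  have K := key hn hk hF1 hFrec hq_mem hq_mono hq_surj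
  have Kj := K j (by omega) r hr
  have Kj1 := K (j + 1) (by omega) r hr
  rw [show k + (j + 1) = k + j + 1 from rfl] at Kj1
  constructor
  · rintro ⟨L, hL, hmemL, hle⟩
    have h1 : F (k + j) ≤ q r := le_sum' hL hmemL
    have h2 : q r < F (k + j + 1) := sum_lt hn hF1 hFrec (k + j) L _ hL hle
    refine ⟨?_, Kj1.mp h2⟩
    by_contra h
    push_neg at h
    have := Kj.mpr (by omega)
    omega
  · rintro ⟨h1, h2⟩
    have hq1 : F (k + j) ≤ q r := by
      by_contra h
      push_neg at h
      have := Kj.mp h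
      omega
    have hq2 : q r < F (k + j + 1) := Kj1.mpr h2
    obtain ⟨hy, hylt⟩ := split hn hk hF1 hFrec hj (hq_mem r hr) hq1 hq2
    obtain ⟨L, hL, hmemL, hleL, -⟩ := build hn hk hF1 hFrec hj hy hylt
    have heq : F (k + j) + (q r - F (k + j)) = q r := by omega
    rw [heq] at hL
    exact ⟨L, hL, hmemL, hleL⟩
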